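/- arXiv:2508.09280 — 3 statements merged into one kernel-verified Lean document; each statement's English description precedes it below -/
import Mathlib

section
/- Suppose all externality functions g_{i,p,j} are constant and let B be a Pareto-minimal feasible budget vector. Let ℱ* = {x ∈ ℱ : G_j(x) ≤ B_j for all j ∈ J}. Then a flow u ∈ ℱ* is implementable if and only if u ∈ argmin_{x ∈ ℱ*} ∑_{(i,p)∈𝒫} τ_{i,p}(u)·x_{i,p}. -/
open Finset

open scoped InnerProductSpace

section Farkas

variable {E : Type*} [NormedAddCommGroup E] [InnerProductSpace ℝ E] [FiniteDimensional ℝ E]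
variable {κ : Type*} [Fintype κ]

/-- Conic Carathéodory: any nonneg combination can be rewritten with linearly
independent support. -/
lemma cone_caratheodory_aux (v : κ → E) (s : Finset κ) :
    ∀ c : κ → ℝ, (∀ k, 0 ≤ c k) → (∀ k ∉ s, c k = 0) →
    ∃ (s' : Finset κ) (c' : κ → ℝ), LinearIndependent ℝ (fun k : s' => v k) ∧
      (∀ k, 0 ≤ c' k) ∧ (∀ k ∉ s', c' k = 0) ∧
      ∑ k, c' k • v k = ∑ k, c k • v k := by
  classical
  induction s using Finset.strongInduction with
  | _ s ih =>
    intro c hc hsupp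
    by_cases hind : LinearIndependent ℝ (fun k : s => v k)
    · exact ⟨s, c, hind, hc, hsupp, rfl⟩
    · -- get a nontrivial relation with a positive coefficient, supported on s
      obtain ⟨a, hasupp, hasum, k₁, hk₁s, hk₁pos⟩ :
          ∃ a : κ → ℝ, (∀ k ∉ s, a k = 0) ∧ (∑ k, a k • v k = 0) ∧
            ∃ k₁ ∈ s, 0 < a k₁ := by
        obtain ⟨gs, hgs, kk, hkk⟩ := Fintype.not_linearIndependent_iff.mp hind
        set a₀ : κ → ℝ := fun k => if h : k ∈ s then gs ⟨k, h⟩ else 0 with ha₀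
        have hsum0 : ∑ k, a₀ k • v k = 0 := by
          rw [← Finset.sum_subset (Finset.subset_univ s)
            (fun k _ hk => by simp [ha₀, hk])]
          rw [← Finset.sum_attach s (fun k => a₀ k • v k)]
          rw [← hgs]
          exact Finset.sum_congr rfl fun k _ => by simp [ha₀, k.2]
        have ha₀kk : a₀ kk ≠ 0 := by simpa [ha₀, kk.2] using hkk
        rcases lt_or_gt_of_ne ha₀kk with hneg | hposit
        · refine ⟨-a₀, fun k hk => by simp [ha₀, hk], by
            simpa [neg_smul] using congrArg Neg.neg hsum0, kk, kk.2, by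
            simpa using hneg⟩
        · exact ⟨a₀, fun k hk => by simp [ha₀, hk], hsum0, kk, kk.2, hposit⟩
      set pos := s.filter (fun k => 0 < a k) with hposdef
      have hposne : pos.Nonempty := ⟨k₁, by simp [hposdef, hk₁s, hk₁pos]⟩
      obtain ⟨k₀, hk₀mem, hk₀eq⟩ :=
        Finset.exists_mem_eq_inf' hposne (fun k => c k / a k)
      set θ := pos.inf' hposne (fun k => c k / a k) with hθdef
      have hk₀pos : 0 < a k₀ := (Finset.mem_filter.mp hk₀mem).2
      have hk₀s : k₀ ∈ s := (Finset.mem_filter.mp hk₀mem).1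
      have hθ0 : 0 ≤ θ := by
        rw [hk₀eq]; exact div_nonneg (hc k₀) hk₀pos.le
      set c' : κ → ℝ := fun k => c k - θ * a k with hc'def
      have hc'nn : ∀ k, 0 ≤ c' k := by
        intro k
        by_cases hka : 0 < a k
        · by_cases hks : k ∈ s
          · have hkpos : k ∈ pos := Finset.mem_filter.mpr ⟨hks, hka⟩
            have := Finset.inf'_le (fun k => c k / a k) hkpos
            rw [← hθdef] at this
            have : θ * a k ≤ c k := by
              rw [le_div_iff₀ hka] at this; linarith [this]
            simp [hc'def]; linarith
          · simp [hasupp k hks] at hka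
        · push_neg at hka
          have : θ * a k ≤ 0 := mul_nonpos_of_nonneg_of_nonpos hθ0 hka
          have := hc k
          simp [hc'def]; linarith
      have hc'k₀ : c' k₀ = 0 := by
        simp only [hc'def, hk₀eq]
        field_simp
        ring
      have hc'supp : ∀ k ∉ s.erase k₀, c' k = 0 := by
        intro k hk
        by_cases hks : k ∈ s
        · have : k = k₀ := by
            by_contra hne
            exact hk (Finset.mem_erase.mpr ⟨hne, hks⟩)
          rw [this]; exact hc'k₀
        · simp [hc'def, hsupp k hks, hasupp k hks]
      have hsum' : ∑ k, c' k • v k = ∑ k, c k • v k := by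
        simp only [hc'def, sub_smul, Finset.sum_sub_distrib, mul_smul]
        rw [← Finset.smul_sum, hasum, smul_zero, sub_zero]
      obtain ⟨s', c'', h1, h2, h3, h4⟩ :=
        ih (s.erase k₀) (Finset.erase_ssubset hk₀s) c' hc'nn hc'supp
      exact ⟨s', c'', h1, h2, h3, by rw [h4, hsum']⟩


lemma isClosed_coneSet (v : κ → E) :
    IsClosed {x : E | ∃ c : κ → ℝ, (∀ k, 0 ≤ c k) ∧ x = ∑ k, c k • v k} := by
  classical
  -- the linear map from coefficients on a subset
  have main : {x : E | ∃ c : κ → ℝ, (∀ k, 0 ≤ c k) ∧ x = ∑ k, c k • v k} =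
      ⋃ s ∈ {s : Finset κ | LinearIndependent ℝ (fun k : s => v k)},
        (LinearMap.mk (σ := RingHom.id ℝ)
          ⟨fun c : (s → ℝ) => ∑ k : s, c k • v (k : κ),
            by intro c₁ c₂; simp [add_smul, Finset.sum_add_distrib]⟩
          (by intro r c; simp [mul_smul, Finset.smul_sum])) ''
          {c : s → ℝ | ∀ k, 0 ≤ c k} := by
    ext x
    simp only [Set.mem_setOf_eq, Set.mem_iUnion, Set.mem_image]
    constructor
    · rintro ⟨c, hc, rfl⟩
      obtain ⟨s', c', hind, hnn, hsupp, hsum⟩ :=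
        cone_caratheodory_aux v Finset.univ c hc (fun k hk => absurd (Finset.mem_univ k) hk)
      refine ⟨s', hind, fun k => c' k, fun k => hnn k, ?_⟩
      simp only [LinearMap.coe_mk, AddHom.coe_mk]
      rw [← hsum]
      rw [← Finset.sum_subset (Finset.subset_univ s')
        (fun k _ hk => by rw [hsupp k hk, zero_smul])]
      exact Finset.sum_coe_sort s' (fun k => c' k • v k)
    · rintro ⟨s, hind, cs, hcs, rfl⟩
      refine ⟨fun k => if h : k ∈ s then cs ⟨k, h⟩ else 0, fun k => by
        by_cases h : k ∈ s <;> simp [h, hcs _], ?_⟩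
      simp only [LinearMap.coe_mk, AddHom.coe_mk]
      rw [← Finset.sum_subset (Finset.subset_univ s)
        (fun k _ hk => by simp [hk])]
      rw [← Finset.sum_coe_sort s (fun k => (if h : k ∈ s then cs ⟨k, h⟩ else 0) • v k)]
      exact Finset.sum_congr rfl fun k _ => by simp [k.2]
  rw [main]
  refine Set.Finite.isClosed_biUnion (Set.toFinite _) (fun s hs => ?_)
  have hinj : LinearMap.ker (LinearMap.mk (σ := RingHom.id ℝ)
      ⟨fun c : (s → ℝ) => ∑ k : s, c k • v (k : κ),
        by intro c₁ c₂; simp [add_smul, Finset.sum_add_distrib]⟩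
      (by intro r c; simp [mul_smul, Finset.smul_sum])) = ⊥ := by
    rw [LinearMap.ker_eq_bot']
    intro c hc0
    have := Fintype.linearIndependent_iff.mp hs c (by simpa using hc0)
    funext k; exact this k
  refine (LinearMap.isClosedEmbedding_of_injective hinj).isClosedMap _ ?_
  have : {c : s → ℝ | ∀ k, 0 ≤ c k} = ⋂ k : s, {c : s → ℝ | 0 ≤ c k} :=
    Set.ext fun c => by simp
  rw [this]
  exact isClosed_iInter fun k => isClosed_le continuous_const (continuous_apply k)

/-- Farkas' lemma in a finite-dimensional real inner product space. -/
theorem farkas_exists (v : κ → E) (t : E)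
    (h : ∀ y : E, (∀ k, 0 ≤ ⟪v k, y⟫_ℝ) → 0 ≤ ⟪t, y⟫_ℝ) :
    ∃ c : κ → ℝ, (∀ k, 0 ≤ c k) ∧ t = ∑ k, c k • v k := by
  classical
  by_contra hnot
  set C : Set E := {x : E | ∃ c : κ → ℝ, (∀ k, 0 ≤ c k) ∧ x = ∑ k, c k • v k} with hC
  have hKconvex : ∀ x ∈ C, ∀ y ∈ C, x + y ∈ C := by
    rintro x ⟨c, hc, rfl⟩ y ⟨c', hc', rfl⟩
    exact ⟨c + c', fun k => add_nonneg (hc k) (hc' k), by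
      simp [add_smul, Finset.sum_add_distrib]⟩
  set K : ConvexCone ℝ E :=
    { carrier := C
      smul_mem' := by
        rintro r hr x ⟨c, hc, rfl⟩
        exact ⟨fun k => r * c k, fun k => mul_nonneg hr.le (hc k), by
          simp [Finset.smul_sum, mul_smul]⟩
      add_mem' := hKconvex } with hK
  have hne : (K : Set E).Nonempty := ⟨0, ⟨fun _ => 0, fun k => le_refl 0, by simp⟩⟩
  have hclosed : IsClosed (K : Set E) := isClosed_coneSet v
  have hmemK : t ∉ K := hnot
  obtain ⟨y, hy1, hy2⟩ : ∃ y, (∀ x ∈ K, 0 ≤ ⟪x, y⟫_ℝ) ∧ ⟪y, t⟫_ℝ < 0 := by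
    have hpt : K.Pointed := ⟨fun _ => 0, fun k => le_refl 0, by simp⟩
    obtain ⟨y, hy1, hy2⟩ := ProperCone.hyperplane_separation' (E := E) (x₀ := t)
      ({ K.toPointedCone hpt with isClosed' := hclosed } : ProperCone ℝ E) hmemK
    exact ⟨y, hy1, by rwa [real_inner_comm]⟩
  have hvk : ∀ k, 0 ≤ ⟪v k, y⟫_ℝ := by
    intro k
    refine hy1 (v k) ⟨fun k' => if k' = k then 1 else 0, fun k' => by positivity, ?_⟩
    simp [ite_smul]
  have := h y hvk
  rw [real_inner_comm] at hy2
  linarith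

/-- Farkas' lemma for plain function spaces with explicit dot products. -/
theorem farkas_pi {σ : Type*} [Fintype σ] (v : κ → σ → ℝ) (t : σ → ℝ)
    (h : ∀ y : σ → ℝ, (∀ k, 0 ≤ ∑ a, v k a * y a) → 0 ≤ ∑ a, t a * y a) :
    ∃ c : κ → ℝ, (∀ k, 0 ≤ c k) ∧ ∀ a, t a = ∑ k, c k * v k a := by
  classical
  set L := (WithLp.linearEquiv 2 ℝ (σ → ℝ)).symm with hLdef
  have happ : ∀ (f : σ → ℝ) (a : σ), (L f) a = f a := fun f a => rfl
  have hinner : ∀ (f y : σ → ℝ), ⟪L f, L y⟫_ℝ = ∑ a, f a * y a := by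
    intro f y
    rw [PiLp.inner_apply]
    exact Finset.sum_congr rfl fun a _ => by
      rw [happ, happ, RCLike.inner_apply, starRingEnd_apply, star_trivial, mul_comm]
  obtain ⟨c, hc, hrep⟩ := farkas_exists (E := EuclideanSpace ℝ σ)
    (fun k => L (v k)) (L t) (fun y hy => by
      set y' := WithLp.linearEquiv 2 ℝ (σ → ℝ) y with hy'def
      have hLy' : L y' = y := (WithLp.linearEquiv 2 ℝ (σ → ℝ)).symm_apply_apply y
      have := h y' (fun k => by rw [← hinner, hLy']; exact hy k)
      rw [← hinner, hLy'] at this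
      exact this)
  refine ⟨c, hc, fun a => ?_⟩
  have h2 := congrArg (WithLp.linearEquiv 2 ℝ (σ → ℝ)) hrep
  rw [map_sum, (WithLp.linearEquiv 2 ℝ (σ → ℝ)).apply_symm_apply] at h2
  have h3 : t = ∑ k, c k • v k := by
    rw [h2]
    exact Finset.sum_congr rfl fun k _ => by
      rw [map_smul, (WithLp.linearEquiv 2 ℝ (σ → ℝ)).apply_symm_apply]
  rw [h3, Finset.sum_apply]
  exact Finset.sum_congr rfl fun k _ => by rw [Pi.smul_apply, smul_eq_mul]

end Farkas

section Eps

/-- For finitely many linear conditions, a small positive `ε` keeps everything nonneg. -/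
lemma exists_pos_forall_nonneg {κ : Type*} [Fintype κ] (a b : κ → ℝ)
    (ha : ∀ k, 0 ≤ a k) (h : ∀ k, b k < 0 → 0 < a k) :
    ∃ ε : ℝ, 0 < ε ∧ ∀ k, 0 ≤ a k + ε * b k := by
  classical
  suffices h' : ∀ s : Finset κ, ∃ ε : ℝ, 0 < ε ∧ ∀ k ∈ s, 0 ≤ a k + ε * b k by
    obtain ⟨ε, hε, h2⟩ := h' Finset.univ
    exact ⟨ε, hε, fun k => h2 k (Finset.mem_univ k)⟩
  intro s
  induction s using Finset.induction with
  | empty => exact ⟨1, one_pos, fun k hk => absurd hk (Finset.notMem_empty k)⟩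
  | @insert k₀ s hk₀ ih =>
    obtain ⟨ε, hε, hih⟩ := ih
    by_cases hb : 0 ≤ b k₀
    · refine ⟨ε, hε, fun k hk => ?_⟩
      rcases Finset.mem_insert.mp hk with rfl | hk'
      · exact add_nonneg (ha k) (mul_nonneg hε.le hb)
      · exact hih k hk'
    · push_neg at hb
      have hak₀ : 0 < a k₀ := h k₀ hb
      have hbpos : 0 < -b k₀ := neg_pos.mpr hb
      refine ⟨min ε (a k₀ / (-b k₀)), lt_min hε (div_pos hak₀ hbpos), ?_⟩
      intro k hk
      rcases Finset.mem_insert.mp hk with rfl | hk'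
      · have h1 : min ε (a k / (-b k)) ≤ a k / (-b k) := min_le_right _ _
        have h2 : min ε (a k / (-b k)) * (-b k) ≤ a k := by
          rw [← le_div_iff₀ hbpos]; exact h1
        nlinarith
      · rcases le_or_gt 0 (b k) with hbk | hbk
        · exact add_nonneg (ha k) (mul_nonneg (lt_min hε (div_pos hak₀ hbpos)).le hbk)
        · have hle := hih k hk'
          have hmin : min ε (a k₀ / (-b k₀)) ≤ ε := min_le_left _ _
          nlinarith

end Eps


variable {I : Type*} [Fintype I] {P : I → Type*} [∀ i, Fintype (P i)]
  {J : Type*} [Fintype J]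

/-- A flow is feasible if it is nonnegative and satisfies all demands. -/
def Feasible (d : I → ℝ) (x : ∀ i, P i → ℝ) : Prop :=
  (∀ i p, 0 ≤ x i p) ∧ ∀ i, ∑ p, x i p = d i

/-- Wardrop equilibrium with respect to a cost function. -/
def IsWardrop (d : I → ℝ) (c : (∀ i, P i → ℝ) → ∀ i, P i → ℝ)
    (x : ∀ i, P i → ℝ) : Prop :=
  Feasible d x ∧ ∀ i p, 0 < x i p → ∀ q, c x i p ≤ c x i q

/-- Total externality of class `j` for constant externality functions `g`. -/
def Gtot (g : ∀ i, P i → J → ℝ) (j : J) (x : ∀ i, P i → ℝ) : ℝ :=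
  ∑ i, ∑ p, g i p j * x i p

/-- The priced cost for constant externality functions. -/
def cPrice (τ : (∀ i, P i → ℝ) → ∀ i, P i → ℝ)
    (g : ∀ i, P i → J → ℝ) (lam : J → ℝ) :
    (∀ i, P i → ℝ) → ∀ i, P i → ℝ :=
  fun x i p => τ x i p + ∑ j, lam j * g i p j

/-- A budget vector is feasible if some feasible flow respects it. -/
def FeasibleBudget (d : I → ℝ) (g : ∀ i, P i → J → ℝ) (B : J → ℝ) : Prop :=
  (∀ j, 0 ≤ B j) ∧ ∃ x, Feasible d x ∧ ∀ j, Gtot g j x ≤ B j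

/-- for constant externality functions and a Pareto-minimal feasible budget `B`,
a flow `u ∈ ℱ*` is implementable iff `u ∈ argmin_{x ∈ ℱ*} ∑ τ_{i,p}(u)·x_{i,p}`,
where `ℱ* = {x ∈ ℱ : G_j(x) ≤ B_j for all j}`. -/
theorem implementable_iff_argmin_of_paretoMinimal
    [∀ i, Nonempty (P i)]
    (d : I → ℝ) (hd : ∀ i, 0 < d i)
    (τ : (∀ i, P i → ℝ) → ∀ i, P i → ℝ)
    (g : ∀ i, P i → J → ℝ) (hg : ∀ i p j, 0 ≤ g i p j)
    (B : J → ℝ) (hB : FeasibleBudget d g B)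
    (hPareto : ¬ ∃ B' : J → ℝ, FeasibleBudget d g B' ∧ (∀ j, B' j ≤ B j) ∧ B' ≠ B)
    (u : ∀ i, P i → ℝ) (hu : Feasible d u) (huB : ∀ j, Gtot g j u ≤ B j) :
    (∃ lam : J → ℝ, (∀ j, 0 ≤ lam j) ∧ IsWardrop d (cPrice τ g lam) u) ↔
      (∀ x, Feasible d x → (∀ j, Gtot g j x ≤ B j) →
        ∑ i, ∑ p, τ u i p * u i p ≤ ∑ i, ∑ p, τ u i p * x i p) := by
  classical
  -- every budget-respecting feasible flow saturates the budget, by Pareto-minimality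
  have hGnn : ∀ x : ∀ i, P i → ℝ, (∀ i p, 0 ≤ x i p) → ∀ j, 0 ≤ Gtot g j x := fun x hx j =>
    Finset.sum_nonneg fun i _ => Finset.sum_nonneg fun p _ => mul_nonneg (hg i p j) (hx i p)
  have key : ∀ x, Feasible d x → (∀ j, Gtot g j x ≤ B j) → ∀ j, Gtot g j x = B j := by
    intro x hx hxB j
    by_contra hne
    exact hPareto ⟨fun j => Gtot g j x, ⟨hGnn x hx.1, x, hx, fun j => le_rfl⟩, hxB,
      fun hEq => hne (congrFun hEq j)⟩
  have hGu : ∀ j, Gtot g j u = B j := key u hu huB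
  have hsig : ∀ f : (Σ i, P i) → ℝ, ∑ a : Σ i, P i, f a = ∑ i, ∑ p, f ⟨i, p⟩ := fun f => by
    rw [← Finset.univ_sigma_univ, Finset.sum_sigma]
  have expand : ∀ (lam : J → ℝ) (z : ∀ i, P i → ℝ),
      ∑ i, ∑ p, cPrice τ g lam u i p * z i p
        = (∑ i, ∑ p, τ u i p * z i p) + ∑ j, lam j * Gtot g j z := by
    intro lam z
    simp only [cPrice, add_mul, Finset.sum_add_distrib]
    congr 1
    have hstep : ∀ i, ∑ p, (∑ j, lam j * g i p j) * z i p
        = ∑ j, ∑ p, lam j * (g i p j * z i p) := by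
      intro i
      rw [Finset.sum_comm]
      exact Finset.sum_congr rfl fun p _ => by
        rw [Finset.sum_mul]
        exact Finset.sum_congr rfl fun j _ => by ring
    rw [Finset.sum_congr rfl fun i _ => hstep i, Finset.sum_comm]
    simp only [Gtot, Finset.mul_sum]
  constructor
  · -- implementable → argmin
    rintro ⟨lam, hlam, hfeas, hW⟩ x hx hxB
    have hupos : ∀ i : I, ∃ p, 0 < u i p := by
      intro i
      by_contra hno
      push_neg at hno
      have h0 : ∑ p, u i p = 0 :=
        Finset.sum_eq_zero fun p _ => le_antisymm (hno p) (hu.1 i p)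
      rw [hu.2 i] at h0
      exact absurd h0 (hd i).ne'
    have hmain : ∑ i, ∑ p, cPrice τ g lam u i p * u i p
        ≤ ∑ i, ∑ p, cPrice τ g lam u i p * x i p := by
      refine Finset.sum_le_sum fun i _ => ?_
      obtain ⟨p₀, hp₀⟩ := hupos i
      have hle : ∀ q, cPrice τ g lam u i p₀ ≤ cPrice τ g lam u i q := hW i p₀ hp₀
      have hL : ∑ p, cPrice τ g lam u i p * u i p = cPrice τ g lam u i p₀ * d i := by
        rw [← hu.2 i, Finset.mul_sum]
        refine Finset.sum_congr rfl fun p _ => ?_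
        rcases (hu.1 i p).eq_or_lt with h0 | hpos
        · rw [← h0]; ring
        · rw [le_antisymm (hW i p hpos p₀) (hle p)]
      have hR : cPrice τ g lam u i p₀ * d i ≤ ∑ p, cPrice τ g lam u i p * x i p := by
        rw [← hx.2 i, Finset.mul_sum]
        exact Finset.sum_le_sum fun p _ => mul_le_mul_of_nonneg_right (hle p) (hx.1 i p)
      linarith
    rw [expand lam u, expand lam x] at hmain
    have heq : ∑ j, lam j * Gtot g j x = ∑ j, lam j * Gtot g j u :=
      Finset.sum_congr rfl fun j _ => by rw [key x hx hxB j, hGu j]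
    linarith
  · -- argmin → implementable
    intro hopt
    have hdual : ∀ y : (Σ i, P i) → ℝ,
        (∀ k : (I ⊕ I) ⊕ (J ⊕ Σ i, P i), 0 ≤ ∑ a : Σ i, P i,
          (Sum.elim
            (Sum.elim (fun i => if a.1 = i then (1:ℝ) else 0)
                      (fun i => if a.1 = i then (-1:ℝ) else 0))
            (Sum.elim (fun j => -(g a.1 a.2 j))
                      (fun b => if u b.1 b.2 = 0 ∧ a = b then (1:ℝ) else 0)) k) * y a) →
        0 ≤ ∑ a : Σ i, P i, τ u a.1 a.2 * y a := by
      intro y hy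
      -- extract the dual conditions
      have hone : ∀ i : I, ∑ a : Σ i, P i, (if a.1 = i then (1:ℝ) else 0) * y a
          = ∑ p, y ⟨i, p⟩ := by
        intro i
        rw [hsig]
        have hrow : ∀ i' : I, ∑ p : P i', (if i' = i then (1:ℝ) else 0) * y ⟨i', p⟩
            = if i' = i then ∑ p, y ⟨i', p⟩ else 0 := by
          intro i'; by_cases h : i' = i <;> simp [h]
        rw [Finset.sum_congr rfl fun i' _ => hrow i']
        simp
      have hIsum : ∀ i : I, ∑ p, y ⟨i, p⟩ = 0 := by
        intro i
        have h1 := hy (Sum.inl (Sum.inl i))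
        have h2 := hy (Sum.inl (Sum.inr i))
        simp only [Sum.elim_inl, Sum.elim_inr] at h1 h2
        rw [hone i] at h1
        have hmone : ∑ a : Σ i, P i, (if a.1 = i then (-1:ℝ) else 0) * y a
            = -∑ a : Σ i, P i, (if a.1 = i then (1:ℝ) else 0) * y a := by
          rw [← Finset.sum_neg_distrib]
          exact Finset.sum_congr rfl fun a _ => by by_cases h : a.1 = i <;> simp [h]
        rw [hmone, hone i] at h2
        linarith
      have hgy : ∀ j : J, ∑ i, ∑ p, g i p j * y ⟨i, p⟩ ≤ 0 := by
        intro j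
        have h1 := hy (Sum.inr (Sum.inl j))
        simp only [Sum.elim_inl, Sum.elim_inr] at h1
        have : ∑ a : Σ i, P i, -(g a.1 a.2 j) * y a
            = -∑ i, ∑ p, g i p j * y ⟨i, p⟩ := by
          rw [← hsig (fun a => g a.1 a.2 j * y a), ← Finset.sum_neg_distrib]
          exact Finset.sum_congr rfl fun a _ => by ring
        rw [this] at h1
        linarith
      have hey : ∀ i p, u i p = 0 → 0 ≤ y ⟨i, p⟩ := by
        intro i p hup
        have h1 := hy (Sum.inr (Sum.inr ⟨i, p⟩))
        simp only [Sum.elim_inl, Sum.elim_inr] at h1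
        have hsum : ∑ a : Σ i, P i,
            (if u i p = 0 ∧ a = (⟨i, p⟩ : Σ i, P i) then (1:ℝ) else 0) * y a = y ⟨i, p⟩ := by
          rw [Finset.sum_congr rfl fun a _ => by
            rw [show (if u i p = 0 ∧ a = (⟨i, p⟩ : Σ i, P i) then (1:ℝ) else 0) * y a
              = if a = (⟨i, p⟩ : Σ i, P i) then y a else 0 from by
                by_cases h : a = (⟨i, p⟩ : Σ i, P i) <;> simp [h, hup]]]
          simp
        rw [hsum] at h1
        exact h1
      -- build a perturbed flow
      obtain ⟨ε, hε, hεnn⟩ := exists_pos_forall_nonneg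
        (fun a : Σ i, P i => u a.1 a.2) y (fun a => hu.1 a.1 a.2)
        (fun a hneg => by
          rcases (hu.1 a.1 a.2).eq_or_lt with h0 | h
          · exact absurd hneg (not_lt.mpr (hey a.1 a.2 h0.symm))
          · exact h)
      set x : ∀ i, P i → ℝ := fun i p => u i p + ε * y ⟨i, p⟩ with hxdef
      have hxfeas : Feasible d x := by
        constructor
        · intro i p; exact hεnn ⟨i, p⟩
        · intro i
          simp only [hxdef]
          rw [Finset.sum_add_distrib, ← Finset.mul_sum, hIsum i, mul_zero, add_zero, hu.2 i]
      have hGx : ∀ j, Gtot g j x = Gtot g j u + ε * ∑ i, ∑ p, g i p j * y ⟨i, p⟩ := by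
        intro j
        simp only [Gtot, hxdef, Finset.mul_sum]
        rw [← Finset.sum_add_distrib]
        refine Finset.sum_congr rfl fun i _ => ?_
        rw [← Finset.sum_add_distrib]
        exact Finset.sum_congr rfl fun p _ => by ring
      have hxB : ∀ j, Gtot g j x ≤ B j := by
        intro j
        rw [hGx j, hGu j]
        nlinarith [hgy j, hε]
      have hle := hopt x hxfeas hxB
      have hexp : ∑ i, ∑ p, τ u i p * x i p
          = (∑ i, ∑ p, τ u i p * u i p) + ε * ∑ i, ∑ p, τ u i p * y ⟨i, p⟩ := by
        simp only [hxdef, Finset.mul_sum]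
        rw [← Finset.sum_add_distrib]
        refine Finset.sum_congr rfl fun i _ => ?_
        rw [← Finset.sum_add_distrib]
        exact Finset.sum_congr rfl fun p _ => by ring
      rw [hexp] at hle
      have hS : 0 ≤ ∑ i, ∑ p, τ u i p * y ⟨i, p⟩ := by nlinarith
      rw [hsig (fun a => τ u a.1 a.2 * y a)]
      exact hS
    have hFar := farkas_pi (κ := (I ⊕ I) ⊕ (J ⊕ Σ i, P i)) (σ := Σ i, P i)
      (fun k a => Sum.elim
        (Sum.elim (fun i => if a.1 = i then (1:ℝ) else 0)
                  (fun i => if a.1 = i then (-1:ℝ) else 0))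
        (Sum.elim (fun j => -(g a.1 a.2 j))
                  (fun b => if u b.1 b.2 = 0 ∧ a = b then (1:ℝ) else 0)) k)
      (fun a => τ u a.1 a.2) hdual
    obtain ⟨c, hc, hrep⟩ := hFar
    -- read off the multipliers
    set lam : J → ℝ := fun j => c (Sum.inr (Sum.inl j)) with hlamdef
    have hval : ∀ i p, τ u i p = (c (Sum.inl (Sum.inl i)) - c (Sum.inl (Sum.inr i)))
        - (∑ j, lam j * g i p j)
        + (if u i p = 0 then c (Sum.inr (Sum.inr ⟨i, p⟩)) else 0) := by
      intro i p
      have h := hrep ⟨i, p⟩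
      rw [Fintype.sum_sum_type, Fintype.sum_sum_type, Fintype.sum_sum_type] at h
      simp only [Sum.elim_inl, Sum.elim_inr] at h
      have hS1 : ∑ i', c (Sum.inl (Sum.inl i')) * (if i = i' then (1:ℝ) else 0)
          = c (Sum.inl (Sum.inl i)) := by
        rw [Finset.sum_congr rfl fun i' _ => by
          rw [mul_ite, mul_one, mul_zero]]
        simp
      have hS2 : ∑ i', c (Sum.inl (Sum.inr i')) * (if i = i' then (-1:ℝ) else 0)
          = -c (Sum.inl (Sum.inr i)) := by
        rw [Finset.sum_congr rfl fun i' _ => by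
          rw [mul_ite, mul_neg_one, mul_zero]]
        simp
      have hS3 : ∑ j, c (Sum.inr (Sum.inl j)) * (-(g i p j))
          = -∑ j, lam j * g i p j := by
        rw [← Finset.sum_neg_distrib]
        exact Finset.sum_congr rfl fun j _ => by rw [hlamdef]; ring
      have hS4 : ∑ b : Σ i, P i,
          c (Sum.inr (Sum.inr b)) * (if u b.1 b.2 = 0 ∧ (⟨i, p⟩ : Σ i, P i) = b then (1:ℝ) else 0)
          = if u i p = 0 then c (Sum.inr (Sum.inr ⟨i, p⟩)) else 0 := by
        rw [Finset.sum_congr rfl fun b _ => by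
          rw [show c (Sum.inr (Sum.inr b)) *
              (if u b.1 b.2 = 0 ∧ (⟨i, p⟩ : Σ i, P i) = b then (1:ℝ) else 0)
            = if (⟨i, p⟩ : Σ i, P i) = b
                then (if u b.1 b.2 = 0 then c (Sum.inr (Sum.inr b)) else 0) else 0 from by
              by_cases h1 : (⟨i, p⟩ : Σ i, P i) = b <;> by_cases h2 : u b.1 b.2 = 0 <;>
                simp [h1, h2]]]
        simp
      rw [hS1, hS2, hS3, hS4] at h
      linarith
    refine ⟨lam, fun j => hc _, hu, ?_⟩
    intro i p hp q
    have hcp : ∀ r, cPrice τ g lam u i r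
        = (c (Sum.inl (Sum.inl i)) - c (Sum.inl (Sum.inr i)))
          + (if u i r = 0 then c (Sum.inr (Sum.inr ⟨i, r⟩)) else 0) := by
      intro r
      show τ u i r + ∑ j, lam j * g i r j = _
      rw [hval i r]; ring
    rw [hcp p, hcp q, if_neg hp.ne']
    have : (0:ℝ) ≤ if u i q = 0 then c (Sum.inr (Sum.inr ⟨i, q⟩)) else 0 := by
      split
      · exact hc _
      · exact le_rfl
    linarith
end

section
/- If all travel time functions τ_{i,p} are continuous and all externality functions g_{i,p,j} are constant, then every feasible budget vector B that is extremal and Pareto-minimal is strictly implementable: there is a price vector λ ∈ ℝ_{>0}^J such that every Wardrop equilibrium x ∈ WE(λ) satisfies G_j(x) ≤ B_j for all j ∈ J. -/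
open Finset Pointwise

variable {I : Type*} [Fintype I] {P : I → Type*} [∀ i, Fintype (P i)]
  {J : Type*} [Fintype J]

set_option linter.unusedSectionVars false

lemma aux_feasible_isClosed (d : I → ℝ) : IsClosed {x : ∀ i, P i → ℝ | Feasible d x} := by
  have : {x : ∀ i, P i → ℝ | Feasible d x} =
      (⋂ i, ⋂ p, {x : ∀ i, P i → ℝ | 0 ≤ x i p}) ∩ ⋂ i, {x | ∑ p, x i p = d i} := by
    ext x; simp [Feasible, Set.mem_iInter, forall_and]
  rw [this]
  refine IsClosed.inter (isClosed_iInter fun i => isClosed_iInter fun p => ?_)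
    (isClosed_iInter fun i => ?_)
  · exact isClosed_le continuous_const ((continuous_apply p).comp (continuous_apply i))
  · exact isClosed_eq (continuous_finset_sum _ fun p _ =>
      (continuous_apply p).comp (continuous_apply i)) continuous_const

lemma aux_feasible_isCompact (d : I → ℝ) : IsCompact {x : ∀ i, P i → ℝ | Feasible d x} := by
  have hsub : {x : ∀ i, P i → ℝ | Feasible d x} ⊆
      Set.pi Set.univ (fun i => Set.pi Set.univ fun _ : P i => Set.Icc 0 (d i)) := by
    rintro x ⟨h0, hs⟩ i _ p _
    exact ⟨h0 i p, by
      rw [← hs i]; exact Finset.single_le_sum (fun q _ => h0 i q) (mem_univ p)⟩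
  exact ((isCompact_univ_pi fun i => isCompact_univ_pi fun _ => isCompact_Icc)).of_isClosed_subset
    (aux_feasible_isClosed d) hsub

lemma aux_feasible_convex (d : I → ℝ) : Convex ℝ {x : ∀ i, P i → ℝ | Feasible d x} := by
  rintro x ⟨hx0, hxs⟩ y ⟨hy0, hys⟩ a b ha hb hab
  refine ⟨fun i p => add_nonneg (mul_nonneg ha (hx0 i p)) (mul_nonneg hb (hy0 i p)), fun i => ?_⟩
  simp only [Pi.add_apply, Pi.smul_apply, smul_eq_mul]
  rw [Finset.sum_add_distrib, ← Finset.mul_sum, ← Finset.mul_sum, hxs i, hys i, ← add_mul, hab,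
    one_mul]

lemma aux_gtot_combo (g : ∀ i, P i → J → ℝ) (j : J) (a b : ℝ) (x y : ∀ i, P i → ℝ) :
    Gtot g j (a • x + b • y) = a * Gtot g j x + b * Gtot g j y := by
  simp only [Gtot, Finset.mul_sum, ← Finset.sum_add_distrib]
  refine Finset.sum_congr rfl fun i _ => Finset.sum_congr rfl fun p _ => ?_
  simp only [Pi.add_apply, Pi.smul_apply, smul_eq_mul]
  ring

lemma aux_key [∀ i, Nonempty (P i)]
    (d : I → ℝ) (hd : ∀ i, 0 < d i) (g : ∀ i, P i → J → ℝ) (hg : ∀ i p j, 0 ≤ g i p j)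
    (B : J → ℝ)
    (hPareto : ¬ ∃ B' : J → ℝ, FeasibleBudget d g B' ∧ (∀ j, B' j ≤ B j) ∧ B' ≠ B)
    (hExtremal : ¬ ∃ B₁ B₂ : J → ℝ, FeasibleBudget d g B₁ ∧ FeasibleBudget d g B₂ ∧
      B₁ ≠ B₂ ∧ ∃ t : ℝ, 0 < t ∧ t < 1 ∧ ∀ j, B j = t * B₁ j + (1 - t) * B₂ j) :
    ∃ μ : J → ℝ, (∀ j, 0 < μ j) ∧
      ∀ σ : ∀ i, P i, (fun j => ∑ i, d i * g i (σ i) j) ≠ B →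
        ∑ j, μ j * B j < ∑ j, μ j * (∑ i, d i * g i (σ i) j) := by
  classical
  set v : (∀ i, P i) → (J → ℝ) := fun σ j => ∑ i, d i * g i (σ i) j with hv
  set S : Set (J → ℝ) := {y | ∃ x, Feasible d x ∧ y = fun j => Gtot g j x} with hS
  have hSconv : Convex ℝ S := by
    rintro y₁ ⟨x₁, hx₁, rfl⟩ y₂ ⟨x₂, hx₂, rfl⟩ a b ha hb hab
    refine ⟨a • x₁ + b • x₂, aux_feasible_convex d hx₁ hx₂ ha hb hab, ?_⟩
    funext j
    simp only [Pi.add_apply, Pi.smul_apply, smul_eq_mul, aux_gtot_combo]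
  have hSFB : ∀ y ∈ S, FeasibleBudget d g y := by
    rintro y ⟨x, hx, rfl⟩
    exact ⟨fun j => Finset.sum_nonneg fun i _ => Finset.sum_nonneg fun p _ =>
      mul_nonneg (hg i p j) (hx.1 i p), x, hx, fun j => le_refl _⟩
  have hvS : ∀ σ, v σ ∈ S := by
    intro σ
    refine ⟨fun i p => if p = σ i then d i else 0, ⟨fun i p => ?_, fun i => ?_⟩, ?_⟩
    · dsimp only; split
      · exact (hd i).le
      · exact le_rfl
    · simp
    · funext j
      simp only [hv, Gtot, mul_ite, mul_zero, Finset.sum_ite_eq', mem_univ, if_true]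
      exact Finset.sum_congr rfl fun i _ => mul_comm _ _
  set Vfin : Finset (J → ℝ) := (Finset.univ.image v).filter (· ≠ B) with hVfin
  have hVfinS : ∀ y ∈ Vfin, y ∈ S ∧ y ≠ B := by
    intro y hy
    rw [hVfin, Finset.mem_filter, Finset.mem_image] at hy
    obtain ⟨⟨σ, _, rfl⟩, hne⟩ := hy
    exact ⟨hvS σ, hne⟩
  by_cases hNE : Vfin.Nonempty
  swap
  · refine ⟨fun _ => 1, fun _ => one_pos, fun σ hσ => absurd ⟨v σ, ?_⟩ hNE⟩
    rw [hVfin, mem_filter, mem_image]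
    exact ⟨⟨σ, mem_univ _, rfl⟩, hσ⟩
  -- main case
  set Q : Set (J → ℝ) := {w | ∀ j, 0 ≤ w j} with hQ
  have hQclosed : IsClosed Q := by
    have : Q = ⋂ j, {w : J → ℝ | 0 ≤ w j} := by ext w; simp [hQ, Set.mem_iInter]
    rw [this]; exact isClosed_iInter fun j => isClosed_le continuous_const (continuous_apply j)
  have hQconv : Convex ℝ Q := by
    intro a ha b hb s t hs ht hst
    intro j
    simp only [Pi.add_apply, Pi.smul_apply, smul_eq_mul]
    exact add_nonneg (mul_nonneg hs (ha j)) (mul_nonneg ht (hb j))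
  set C : Set (J → ℝ) := convexHull ℝ (Vfin : Set (J → ℝ)) + Q with hC
  have hCclosed : IsClosed C :=
    hQclosed.add_left_of_isCompact ((Vfin : Set (J → ℝ)).toFinite.isCompact_convexHull (𝕜 := ℝ))
  have hCconv : Convex ℝ C := (convex_convexHull ℝ _).add hQconv
  have hullS : convexHull ℝ (↑Vfin : Set (J → ℝ)) ⊆ S :=
    convexHull_min (fun y hy => (hVfinS y hy).1) hSconv
  have hhullC : ∀ z ∈ convexHull ℝ (↑Vfin : Set (J → ℝ)), ∀ q ∈ Q, z + q ∈ C :=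
    fun z hz q hq => Set.add_mem_add hz hq
  have hmemC : ∀ y ∈ Vfin, (y : J → ℝ) ∈ C := by
    intro y hy
    have := hhullC y (subset_convexHull ℝ _ (Finset.mem_coe.mpr hy)) 0 (fun j => le_rfl)
    simpa using this
  have hBnotC : B ∉ C := by
    intro hBC
    obtain ⟨z, hz, w, hw, hzw⟩ := Set.mem_add.mp hBC
    have hzS := hullS hz
    have hzle : ∀ j, z j ≤ B j := by
      intro j
      have h1 := congrFun hzw j
      simp only [Pi.add_apply] at h1
      have := hw j
      linarith
    have hzB : z = B := by
      by_contra hne; exact hPareto ⟨z, hSFB z hzS, hzle, hne⟩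
    rw [hzB] at hz
    rw [Finset.mem_convexHull'] at hz
    obtain ⟨wt, hw0, hw1, hwsum⟩ := hz
    set sp := Vfin.filter (fun y => 0 < wt y) with hsp
    have hspsub : sp ⊆ Vfin := Finset.filter_subset _ _
    have hsum1 : ∑ y ∈ sp, wt y = 1 := by
      rw [← hw1]
      exact Finset.sum_filter_of_ne fun y hy hne => lt_of_le_of_ne (hw0 y hy) (Ne.symm hne)
    have hsumv : ∑ y ∈ sp, wt y • y = B := by
      rw [← hwsum]
      exact Finset.sum_filter_of_ne fun y hy hne =>
        lt_of_le_of_ne (hw0 y hy) (Ne.symm fun h0 => hne (by rw [h0, zero_smul]))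
    have hspne : sp.Nonempty := by
      rcases Finset.eq_empty_or_nonempty sp with h | h
      · rw [h, Finset.sum_empty] at hsum1; norm_num at hsum1
      · exact h
    obtain ⟨y₀, hy₀⟩ := hspne
    set t := wt y₀ with htdef
    have ht0 : 0 < t := (Finset.mem_filter.mp hy₀).2
    have hterase : ∑ y ∈ sp.erase y₀, wt y = 1 - t := by
      have := Finset.add_sum_erase sp wt hy₀
      rw [hsum1] at this
      linarith
    have ht1 : t ≤ 1 := by
      have h0 : 0 ≤ ∑ y ∈ sp.erase y₀, wt y :=
        Finset.sum_nonneg fun y hy => hw0 y (hspsub (Finset.mem_of_mem_erase hy))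
      linarith
    rcases eq_or_lt_of_le ht1 with hteq | htlt
    · have herase : sp.erase y₀ = ∅ := by
        rw [Finset.eq_empty_iff_forall_notMem]
        intro y hy
        have hpos := (Finset.mem_filter.mp (Finset.mem_of_mem_erase hy)).2
        have hzero : ∑ y ∈ sp.erase y₀, wt y = 0 := by rw [hterase, ← hteq]; ring
        have := (Finset.sum_eq_zero_iff_of_nonneg
          (fun y hy => hw0 y (hspsub (Finset.mem_of_mem_erase hy)))).mp hzero y hy
        rw [this] at hpos; exact lt_irrefl 0 hpos
      have hBy₀ : B = y₀ := by
        rw [← hsumv, ← Finset.add_sum_erase sp (fun y => wt y • y) hy₀, herase,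
          Finset.sum_empty, add_zero, ← htdef, hteq, one_smul]
      exact (hVfinS y₀ (hspsub hy₀)).2 hBy₀.symm
    · set B₂ := (sp.erase y₀).centerMass wt id with hB₂
      have h1t : (0:ℝ) < 1 - t := by linarith
      have hB₂mem : B₂ ∈ convexHull ℝ (↑Vfin : Set (J → ℝ)) := by
        apply Finset.centerMass_mem_convexHull
        · intro y hy; exact hw0 y (hspsub (Finset.mem_of_mem_erase hy))
        · rw [hterase]; exact h1t
        · intro y hy; exact Finset.mem_coe.mpr (hspsub (Finset.mem_of_mem_erase hy))
      have hcomb : B = t • y₀ + (1 - t) • B₂ := by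
        rw [hB₂, Finset.centerMass, hterase, smul_inv_smul₀ (ne_of_gt h1t)]
        rw [← hsumv, ← Finset.add_sum_erase sp (fun y => wt y • y) hy₀]
        simp only [id]
        rfl
      have hy₀FB : FeasibleBudget d g y₀ := hSFB _ (hVfinS y₀ (hspsub hy₀)).1
      have hB₂FB : FeasibleBudget d g B₂ := hSFB _ (hullS hB₂mem)
      have hne : y₀ ≠ B₂ := by
        intro h
        apply (hVfinS y₀ (hspsub hy₀)).2
        rw [hcomb, ← h, Convex.combo_self (by ring : t + (1 - t) = 1)]
      exact hExtremal ⟨y₀, B₂, hy₀FB, hB₂FB, hne, t, ht0, htlt, fun j => by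
        have := congrFun hcomb j
        simpa [Pi.add_apply, Pi.smul_apply, smul_eq_mul] using this⟩
  obtain ⟨f, u, hfB, hfC⟩ := geometric_hahn_banach_point_closed hCconv hCclosed hBnotC
  set e : J → (J → ℝ) := fun j j' => if j = j' then 1 else 0 with he
  set μ₀ : J → ℝ := fun j => f (e j) with hμ₀
  have hf : ∀ y : J → ℝ, f y = ∑ j, y j * μ₀ j := by
    intro y
    conv_lhs => rw [pi_eq_sum_univ y]
    rw [map_sum]
    exact Finset.sum_congr rfl fun j _ => by rw [map_smul, smul_eq_mul]
  obtain ⟨w₀, hw₀⟩ := hNE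
  have hfw₀ : u < f w₀ := hfC w₀ (hmemC w₀ hw₀)
  have hμ₀0 : ∀ j, 0 ≤ μ₀ j := by
    intro j
    by_contra hneg
    push_neg at hneg
    set s := (u - f w₀) / μ₀ j with hs
    have hspos : 0 < s := div_pos_of_neg_of_neg (by linarith) hneg
    have hyC : w₀ + s • e j ∈ C := by
      apply hhullC w₀ (subset_convexHull ℝ _ (Finset.mem_coe.mpr hw₀))
      intro j'
      simp only [Pi.smul_apply, he, smul_eq_mul]
      split
      · simpa using hspos.le
      · simp
    have hfy : f (w₀ + s • e j) = f w₀ + s * μ₀ j := by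
      rw [map_add, map_smul, smul_eq_mul, hμ₀]
    have hsv : s * μ₀ j = u - f w₀ := div_mul_cancel₀ _ (ne_of_lt hneg)
    have := hfC _ hyC
    rw [hfy, hsv] at this
    linarith
  have hVstrict : ∀ y ∈ Vfin, ∑ j, B j * μ₀ j < ∑ j, y j * μ₀ j := by
    intro y hy
    have h1 : f B < u := hfB
    have h2 : u < f y := hfC y (hmemC y hy)
    rw [hf B] at h1
    rw [hf y] at h2
    linarith
  set img1 := Vfin.image (fun y => (∑ j, y j * μ₀ j) - ∑ j, B j * μ₀ j) with himg1
  have himg1ne : img1.Nonempty := ⟨_, Finset.mem_image.mpr ⟨w₀, hw₀, rfl⟩⟩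
  set δ := img1.min' himg1ne with hδ
  have hδpos : 0 < δ := by
    obtain ⟨y, hy, hmin⟩ := Finset.mem_image.mp (img1.min'_mem himg1ne)
    rw [hδ, ← hmin]
    have := hVstrict y hy
    linarith
  set img2 := Vfin.image (fun y => ∑ j, (B j - y j)) with himg2
  have himg2ne : img2.Nonempty := ⟨_, Finset.mem_image.mpr ⟨w₀, hw₀, rfl⟩⟩
  set Mx := max (img2.max' himg2ne) 1 with hMx
  have hMxpos : (0:ℝ) < Mx := lt_of_lt_of_le one_pos (le_max_right _ _)
  set ε := δ / (2 * Mx) with hε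
  have hεpos : 0 < ε := div_pos hδpos (by linarith)
  refine ⟨fun j => μ₀ j + ε, fun j => by have := hμ₀0 j; dsimp only; linarith, ?_⟩
  intro σ hσ
  have hyV : v σ ∈ Vfin := by
    rw [hVfin, mem_filter, mem_image]
    exact ⟨⟨σ, mem_univ _, rfl⟩, hσ⟩
  have h1 : δ ≤ (∑ j, v σ j * μ₀ j) - ∑ j, B j * μ₀ j :=
    Finset.min'_le _ _ (Finset.mem_image.mpr ⟨v σ, hyV, rfl⟩)
  have h2mem : (∑ j, (B j - v σ j)) ∈ img2 := by
    rw [himg2]; exact Finset.mem_image.mpr ⟨v σ, hyV, rfl⟩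
  have h2 : ∑ j, (B j - v σ j) ≤ Mx :=
    le_trans (Finset.le_max' img2 _ h2mem) (le_max_left _ _)
  have expand : ∀ z : J → ℝ, ∑ j, (μ₀ j + ε) * z j = (∑ j, z j * μ₀ j) + ε * ∑ j, z j := by
    intro z
    rw [Finset.mul_sum, ← Finset.sum_add_distrib]
    exact Finset.sum_congr rfl fun j _ => by ring
  have goal2 : ∑ j, (μ₀ j + ε) * B j < ∑ j, (μ₀ j + ε) * v σ j := by
    rw [expand B, expand (v σ)]
    have h3 : ε * ∑ j, (B j - v σ j) ≤ ε * Mx := mul_le_mul_of_nonneg_left h2 hεpos.le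
    have h4 : ε * Mx = δ / 2 := by
      rw [hε]
      field_simp
    have h5 : ε * ∑ j, B j - ε * ∑ j, v σ j = ε * ∑ j, (B j - v σ j) := by
      rw [Finset.sum_sub_distrib, mul_sub]
    linarith
  exact goal2

/-- if all travel times are continuous and all externality functions are
constant, then every extremal and Pareto-minimal feasible budget vector is strictly
implementable: there is a strictly positive price vector such that every Wardrop
equilibrium respects the budget. -/
theorem extremal_pareto_minimal_strictly_implementable
    [∀ i, Nonempty (P i)]
    (d : I → ℝ) (hd : ∀ i, 0 < d i)
    (τ : (∀ i, P i → ℝ) → ∀ i, P i → ℝ)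
    (hτ : ∀ i p, ContinuousOn (fun x => τ x i p) {x | Feasible d x})
    (g : ∀ i, P i → J → ℝ) (hg : ∀ i p j, 0 ≤ g i p j)
    (B : J → ℝ) (hB : FeasibleBudget d g B)
    (hPareto : ¬ ∃ B' : J → ℝ, FeasibleBudget d g B' ∧ (∀ j, B' j ≤ B j) ∧ B' ≠ B)
    (hExtremal : ¬ ∃ B₁ B₂ : J → ℝ, FeasibleBudget d g B₁ ∧ FeasibleBudget d g B₂ ∧
      B₁ ≠ B₂ ∧ ∃ t : ℝ, 0 < t ∧ t < 1 ∧ ∀ j, B j = t * B₁ j + (1 - t) * B₂ j) :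
    ∃ lam : J → ℝ, (∀ j, 0 < lam j) ∧
      ∀ x, IsWardrop d (cPrice τ g lam) x → ∀ j, Gtot g j x ≤ B j := by
  classical
  obtain ⟨hB0, x₀, hx₀F, hx₀B⟩ := hB
  -- Step 1: B is exactly attained by x₀
  have hBx₀ : ∀ j, Gtot g j x₀ = B j := by
    by_contra hcon
    push_neg at hcon
    refine hPareto ⟨fun j => Gtot g j x₀, ⟨fun j => ?_, x₀, hx₀F, fun j => le_rfl⟩, hx₀B, ?_⟩
    · exact Finset.sum_nonneg fun i _ => Finset.sum_nonneg fun p _ =>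
        mul_nonneg (hg i p j) (hx₀F.1 i p)
    · intro hEq
      obtain ⟨j, hj⟩ := hcon
      exact hj (congrFun hEq j)
  -- Step 2: separating prices
  obtain ⟨μ, hμpos, hμsep⟩ := aux_key d hd g hg B hPareto hExtremal
  -- priced path costs and per-commodity minima
  set h : ∀ i, P i → ℝ := fun i p => ∑ j, μ j * g i p j with hh
  have hmono : ∀ i, (Finset.univ : Finset (P i)).Nonempty := fun i => Finset.univ_nonempty
  set m : I → ℝ := fun i => Finset.univ.inf' (hmono i) (h i) with hm
  have hmle : ∀ i p, m i ≤ h i p := fun i p => Finset.inf'_le _ (mem_univ p)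
  have hmex : ∀ i, ∃ p : P i, h i p = m i := by
    intro i
    obtain ⟨p, _, hp⟩ := Finset.exists_mem_eq_inf' (hmono i) (h i)
    exact ⟨p, hp.symm⟩
  choose σz hσz using hmex
  -- the gap γ
  set A : Finset (Σ i, P i) := Finset.univ.filter (fun q => h q.1 q.2 ≠ m q.1) with hA
  set γ : ℝ := if hAne : A.Nonempty then (A.image fun q => h q.1 q.2 - m q.1).min' (hAne.image _)
    else 1 with hγ
  have hγpos : 0 < γ := by
    by_cases hAne : A.Nonempty
    · rw [hγ, dif_pos hAne, Finset.lt_min'_iff]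
      intro b hb
      obtain ⟨q, hq, rfl⟩ := Finset.mem_image.mp hb
      have h1 := hmle q.1 q.2
      have h2 := (Finset.mem_filter.mp hq).2
      cases lt_or_eq_of_le h1 with
      | inl hlt => linarith
      | inr heq => exact absurd heq.symm h2
    · rw [hγ, dif_neg hAne]; exact one_pos
  have hγle : ∀ i (p : P i), h i p ≠ m i → γ ≤ h i p - m i := by
    intro i p hne
    have hmem : (⟨i, p⟩ : Σ i, P i) ∈ A := Finset.mem_filter.mpr ⟨mem_univ _, hne⟩
    have hAne : A.Nonempty := ⟨_, hmem⟩
    rw [hγ, dif_pos hAne]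
    apply Finset.min'_le
    exact Finset.mem_image.mpr ⟨⟨i, p⟩, hmem, rfl⟩
  -- bound on travel times
  have hcomp := aux_feasible_isCompact (P := P) d
  choose Cb hCb using fun q : Σ i, P i => hcomp.exists_bound_of_continuousOn (hτ q.1 q.2)
  set M : ℝ := ∑ q : Σ i, P i, max (Cb q) 0 with hM
  have hM0 : 0 ≤ M := Finset.sum_nonneg fun q _ => le_max_right _ _
  have hMb : ∀ x, Feasible d x → ∀ i p, |τ x i p| ≤ M := by
    intro x hx i p
    have h1 : ‖τ x i p‖ ≤ Cb ⟨i, p⟩ := hCb ⟨i, p⟩ x hx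
    rw [Real.norm_eq_abs] at h1
    refine le_trans h1 (le_trans (le_max_left (Cb ⟨i, p⟩) 0) ?_)
    exact Finset.single_le_sum (f := fun q : Σ i, P i => max (Cb q) 0)
      (fun q _ => le_max_right _ _) (mem_univ (⟨i, p⟩ : Σ i, P i))
  -- the scaling factor
  set t : ℝ := (2 * M + 1) / γ with ht
  have ht0 : 0 < t := div_pos (by linarith) hγpos
  have htγ : t * γ = 2 * M + 1 := div_mul_cancel₀ _ (ne_of_gt hγpos)
  refine ⟨fun j => t * μ j, fun j => mul_pos ht0 (hμpos j), ?_⟩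
  rintro x ⟨hxF, hxW⟩ j
  -- priced cost rewrites
  have hcost : ∀ i (p : P i), ∑ j', (t * μ j') * g i p j' = t * h i p := by
    intro i p
    rw [hh, Finset.mul_sum]
    exact Finset.sum_congr rfl fun j' _ => by ring
  -- support of x is on minimum-externality paths
  have hsup : ∀ i (p : P i), 0 < x i p → h i p = m i := by
    intro i p hp
    by_contra hne
    have h1 := hxW i p hp (σz i)
    simp only [cPrice] at h1
    rw [hcost i p, hcost i (σz i), hσz i] at h1
    have h2 : |τ x i p| ≤ M := hMb x hxF i p
    have h3 : |τ x i (σz i)| ≤ M := hMb x hxF i (σz i)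
    have h4 : γ ≤ h i p - m i := hγle i p hne
    have h5 : t * γ ≤ t * (h i p - m i) := mul_le_mul_of_nonneg_left h4 ht0.le
    rw [abs_le] at h2 h3
    rw [mul_sub] at h5
    rw [htγ] at h5
    linarith
  -- every selection of minimizers attains B
  have hvB : ∀ σ : ∀ i, P i, (∀ i, h i (σ i) = m i) → (fun j => ∑ i, d i * g i (σ i) j) = B := by
    intro σ hσ
    by_contra hne
    have hlt := hμsep σ hne
    have e1 : ∑ j', μ j' * (∑ i, d i * g i (σ i) j') = ∑ i, d i * m i := by
      simp_rw [Finset.mul_sum]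
      rw [Finset.sum_comm]
      refine Finset.sum_congr rfl fun i _ => ?_
      rw [← hσ i]
      simp only [hh]
      rw [Finset.mul_sum]
      exact Finset.sum_congr rfl fun j' _ => by ring
    have e2 : ∑ i, d i * m i ≤ ∑ j', μ j' * B j' := by
      have hB' : ∀ j', B j' = ∑ i, ∑ p, g i p j' * x₀ i p := fun j' => (hBx₀ j').symm
      calc ∑ i, d i * m i = ∑ i, ∑ p, m i * x₀ i p := by
            refine Finset.sum_congr rfl fun i _ => ?_
            rw [← Finset.mul_sum, hx₀F.2 i, mul_comm]
        _ ≤ ∑ i, ∑ p, h i p * x₀ i p := by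
            refine Finset.sum_le_sum fun i _ => Finset.sum_le_sum fun p _ => ?_
            exact mul_le_mul_of_nonneg_right (hmle i p) (hx₀F.1 i p)
        _ = ∑ i, ∑ p, ∑ j', μ j' * g i p j' * x₀ i p := by
            refine Finset.sum_congr rfl fun i _ => Finset.sum_congr rfl fun p _ => ?_
            simp only [hh]
            rw [Finset.sum_mul]
        _ = ∑ j', μ j' * B j' := by
            have hsw : ∀ i, ∑ p, ∑ j', μ j' * g i p j' * x₀ i p
                = ∑ j', ∑ p, μ j' * g i p j' * x₀ i p := fun i => Finset.sum_comm
            simp_rw [hsw]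
            rw [Finset.sum_comm]
            refine Finset.sum_congr rfl fun j' _ => ?_
            rw [hB' j', Finset.mul_sum]
            refine Finset.sum_congr rfl fun i _ => ?_
            rw [Finset.mul_sum]
            exact Finset.sum_congr rfl fun p _ => by ring
    linarith
  have hσzB : (fun j => ∑ i, d i * g i (σz i) j) = B := hvB σz hσz
  -- g is constant on minimizers
  have hconst : ∀ i (p : P i), h i p = m i → ∀ j', g i p j' = g i (σz i) j' := by
    intro i p hp j'
    have h1 : (fun j => ∑ i', d i' * g i' (Function.update σz i p i') j) = B := by
      apply hvB
      intro i'
      rcases eq_or_ne i' i with rfl | hne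
      · rw [Function.update_self]; exact hp
      · rw [Function.update_of_ne hne]; exact hσz i'
    have h2 := congrFun (h1.trans hσzB.symm) j'
    have h3 : ∑ i', d i' * g i' (Function.update σz i p i') j'
        = d i * g i p j' + ∑ i' ∈ Finset.univ.erase i, d i' * g i' (σz i') j' := by
      rw [← Finset.add_sum_erase _ _ (mem_univ i), Function.update_self]
      congr 1
      refine Finset.sum_congr rfl fun i' hi' => ?_
      rw [Function.update_of_ne (Finset.ne_of_mem_erase hi')]
    have h4 : ∑ i', d i' * g i' (σz i') j'
        = d i * g i (σz i) j' + ∑ i' ∈ Finset.univ.erase i, d i' * g i' (σz i') j' := by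
      rw [← Finset.add_sum_erase _ _ (mem_univ i)]
    rw [h3, h4] at h2
    have h5 : d i * g i p j' = d i * g i (σz i) j' := by linarith
    exact mul_left_cancel₀ (ne_of_gt (hd i)) h5
  -- conclusion
  have hfinal : Gtot g j x = B j := by
    have hcol : ∀ i, ∑ p, g i p j * x i p = g i (σz i) j * d i := by
      intro i
      rw [← hxF.2 i, Finset.mul_sum]
      refine Finset.sum_congr rfl fun p _ => ?_
      rcases (hxF.1 i p).eq_or_lt with h0 | h0
      · rw [← h0, mul_zero, mul_zero]
      · rw [hconst i p (hsup i p h0) j]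
    rw [Gtot]
    simp_rw [hcol]
    rw [← congrFun hσzB j]
    exact Finset.sum_congr rfl fun i _ => mul_comm _ _
  exact le_of_eq hfinal
end

section
/- Assume the travel times τ have a differentiable convex potential Φ (τ(x) = ∇Φ(x) on ℱ), all externality functions g_{i,p,j} are constant, and B is a Pareto-minimal feasible budget vector. Then a feasible flow x is implementable and respects B if and only if x minimizes Φ over the set {y ∈ ℱ : G_j(y) ≤ B_j for all j ∈ J}. -/
open Finset

set_option maxHeartbeats 1000000

section FarkasAux

variable {α : Type*} [Fintype α]

/-- Auxiliary dot product on finitely supported real vectors. -/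
def dotp (u v : α → ℝ) : ℝ := ∑ s, u s * v s

lemma dotp_sub_smul_left (u A v : α → ℝ) (r : ℝ) :
    dotp (u - r • A) v = dotp u v - r * dotp A v := by
  simp only [dotp, Pi.sub_apply, Pi.smul_apply, smul_eq_mul, sub_mul,
    Finset.sum_sub_distrib, Finset.mul_sum]
  congr 1
  exact Finset.sum_congr rfl fun s _ => by ring

lemma dotp_sub_smul_right (u v w : α → ℝ) (r : ℝ) :
    dotp u (v - r • w) = dotp u v - r * dotp u w := by
  simp only [dotp, Pi.sub_apply, Pi.smul_apply, smul_eq_mul, mul_sub,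
    Finset.sum_sub_distrib, Finset.mul_sum]
  congr 1
  exact Finset.sum_congr rfl fun s _ => by ring

lemma farkas_fin : ∀ (m : ℕ) (a : Fin m → α → ℝ) (c : α → ℝ),
    (∀ v : α → ℝ, (∀ k, 0 ≤ dotp (a k) v) → 0 ≤ dotp c v) →
    ∃ lam : Fin m → ℝ, (∀ k, 0 ≤ lam k) ∧ c = ∑ k, lam k • a k := by
  intro m
  induction m with
  | zero =>
    intro a c h
    refine ⟨0, fun k => le_rfl, ?_⟩
    have h0 : 0 ≤ dotp c (-c) := h (-c) (fun k => k.elim0)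
    have h1 : dotp c (-c) = -dotp c c := by
      simp [dotp, mul_neg, Finset.sum_neg_distrib]
    have h2 : 0 ≤ dotp c c := Finset.sum_nonneg fun s _ => mul_self_nonneg _
    have h3 : dotp c c = 0 := le_antisymm (by linarith [h0, h1]) h2
    have h4 : ∀ s ∈ (univ : Finset α), c s * c s = 0 :=
      (Finset.sum_eq_zero_iff_of_nonneg (fun s _ => mul_self_nonneg _)).mp h3
    funext s
    simpa [mul_self_eq_zero] using h4 s (mem_univ s)
  | succ m ih =>
    intro a c h
    set A := a (Fin.last m) with hA
    by_cases hcase : ∀ v : α → ℝ, (∀ k : Fin m, 0 ≤ dotp (a k.castSucc) v) → 0 ≤ dotp c v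
    · obtain ⟨lam, hlam, hc⟩ := ih (fun k => a k.castSucc) c hcase
      refine ⟨Fin.snoc lam 0, ?_, ?_⟩
      · intro k
        induction k using Fin.lastCases with
        | last => simp
        | cast k => simpa using hlam k
      · rw [Fin.sum_univ_castSucc]
        simpa using hc
    · push_neg at hcase
      obtain ⟨w, hw, hcw⟩ := hcase
      have hAw : dotp A w < 0 := by
        by_contra hge
        push_neg at hge
        refine absurd (h w ?_) (not_le.mpr hcw)
        intro k
        induction k using Fin.lastCases with
        | last => exact hge
        | cast k => exact hw k
      have hAw0 : dotp A w ≠ 0 := ne_of_lt hAw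
      set β : Fin m → ℝ := fun k => dotp (a k.castSucc) w / dotp A w with hβ
      set γ : ℝ := dotp c w / dotp A w with hγ
      have key : ∀ v : α → ℝ,
          (∀ k : Fin m, 0 ≤ dotp (a k.castSucc - β k • A) v) →
          0 ≤ dotp (c - γ • A) v := by
        intro v hv
        set t : ℝ := dotp A v / dotp A w with ht
        have hAv' : dotp A (v - t • w) = 0 := by
          rw [dotp_sub_smul_right, ht]; field_simp; ring
        have hmain : 0 ≤ dotp c (v - t • w) := by
          apply h
          intro k
          induction k using Fin.lastCases with
          | last => rw [← hA, hAv']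
          | cast k =>
            rw [dotp_sub_smul_right]
            have h5 := hv k
            rw [dotp_sub_smul_left] at h5
            have heq : t * dotp (a k.castSucc) w = β k * dotp A v := by
              rw [ht, hβ]; field_simp
            linarith
        have hfin : dotp (c - γ • A) v = dotp c (v - t • w) := by
          rw [dotp_sub_smul_left, dotp_sub_smul_right]
          have : t * dotp c w = γ * dotp A v := by
            rw [ht, hγ]; field_simp
          linarith
        linarith [hmain, hfin]
      obtain ⟨mu, hmu, hcmu⟩ := ih (fun k => a k.castSucc - β k • A) (c - γ • A) key
      have hγpos : 0 < γ := div_pos_of_neg_of_neg hcw hAw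
      have hβk : ∀ k, β k ≤ 0 := fun k => div_nonpos_of_nonneg_of_nonpos (hw k) hAw.le
      have hsum : ∑ k, mu k * β k ≤ 0 :=
        Finset.sum_nonpos fun k _ => mul_nonpos_of_nonneg_of_nonpos (hmu k) (hβk k)
      refine ⟨Fin.snoc mu (γ - ∑ k, mu k * β k), ?_, ?_⟩
      · intro k
        induction k using Fin.lastCases with
        | last => simp only [Fin.snoc_last]; linarith
        | cast k => simpa using hmu k
      · rw [Fin.sum_univ_castSucc]
        simp only [Fin.snoc_castSucc, Fin.snoc_last]
        have hc2 : c = (c - γ • A) + γ • A := by abel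
        rw [hc2, hcmu]
        funext s
        simp only [Pi.add_apply, Pi.sub_apply, Pi.smul_apply, Finset.sum_apply,
          smul_eq_mul, sub_mul, mul_sub]
        rw [Finset.sum_sub_distrib, ← hA, Finset.sum_mul]
        rw [Finset.sum_congr rfl (fun k _ => by ring :
          ∀ k ∈ univ, mu k * (β k * A s) = mu k * β k * A s)]
        ring

lemma farkas {ι : Type*} [Fintype ι] (a : ι → α → ℝ) (c : α → ℝ)
    (h : ∀ v : α → ℝ, (∀ k, 0 ≤ dotp (a k) v) → 0 ≤ dotp c v) :
    ∃ lam : ι → ℝ, (∀ k, 0 ≤ lam k) ∧ c = ∑ k, lam k • a k := by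
  obtain ⟨lam, hlam, hc⟩ := farkas_fin (Fintype.card ι) (a ∘ (Fintype.equivFin ι).symm) c
    (fun v hv => h v fun k => by simpa using hv (Fintype.equivFin ι k))
  refine ⟨lam ∘ Fintype.equivFin ι, fun k => hlam _, ?_⟩
  rw [hc]
  exact (Fintype.sum_equiv (Fintype.equivFin ι) _ _ fun k => by simp).symm

end FarkasAux

section DerivAux

open Filter

variable {E : Type*} [NormedAddCommGroup E] [NormedSpace ℝ E]

lemma hasDerivAt_comp_line (Φ : E → ℝ) (hΦdiff : Differentiable ℝ Φ) (x V : E) :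
    HasDerivAt (fun t : ℝ => Φ (x + t • V)) (fderiv ℝ Φ x V) 0 := by
  have h1 : HasDerivAt (fun t : ℝ => x + t • V) V 0 := by
    simpa using ((hasDerivAt_id (0:ℝ)).smul_const V).const_add x
  have h2 : HasFDerivAt Φ (fderiv ℝ Φ x) ((fun t : ℝ => x + t • V) 0) := by
    simpa using (hΦdiff x).hasFDerivAt
  exact h2.comp_hasDerivAt 0 h1

lemma deriv_le_of_slope (φ : ℝ → ℝ) (D : ℝ) (hφ : HasDerivAt φ D 0) (K : ℝ)
    (hslope : ∀ t : ℝ, 0 < t → t ≤ 1 → φ t - φ 0 ≤ t * K) : D ≤ K := by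
  have h1 : Tendsto (slope φ 0) (nhdsWithin 0 (Set.Ioi 0)) (nhds D) :=
    (hasDerivAt_iff_tendsto_slope.mp hφ).mono_left
      (nhdsWithin_mono 0 fun t ht => ne_of_gt ht)
  refine le_of_tendsto h1 ?_
  filter_upwards [Ioc_mem_nhdsGT_of_mem (Set.mem_Ico.mpr ⟨le_refl (0:ℝ), zero_lt_one⟩)]
    with t ht
  have h0 : (0:ℝ) < t := ht.1
  rw [slope_def_field, sub_zero, div_le_iff₀ h0]
  have := hslope t h0 ht.2
  nlinarith

end DerivAux

variable {I : Type*} [Fintype I] [DecidableEq I]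
  {P : I → Type*} [∀ i, Fintype (P i)] [∀ i, DecidableEq (P i)]
  {J : Type*} [Fintype J]

lemma pi_decomp (v : ∀ i, P i → ℝ) :
    v = ∑ i, ∑ p, v i p • (Pi.single i (Pi.single p (1:ℝ)) : ∀ i, P i → ℝ) := by
  funext i' p'
  simp only [Finset.sum_apply, Pi.smul_apply, smul_eq_mul]
  rw [Finset.sum_eq_single i']
  · rw [Finset.sum_eq_single p']
    · simp
    · intro b _ hb
      simp [Pi.single_eq_same, Pi.single_eq_of_ne (Ne.symm hb)]
    · simp
  · intro b _ hb
    simp [Pi.single_eq_of_ne (Ne.symm hb)]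
  · simp

lemma fderiv_eval (d : I → ℝ) (τ : (∀ i, P i → ℝ) → ∀ i, P i → ℝ)
    (Φ : (∀ i, P i → ℝ) → ℝ)
    (hΦgrad : ∀ x, Feasible d x →
      ∀ i p, fderiv ℝ Φ x (Pi.single i (Pi.single p (1 : ℝ))) = τ x i p)
    (x : ∀ i, P i → ℝ) (hx : Feasible d x) (v : ∀ i, P i → ℝ) :
    fderiv ℝ Φ x v = ∑ i, ∑ p, v i p * τ x i p := by
  conv_lhs => rw [pi_decomp v]
  rw [map_sum]
  refine Finset.sum_congr rfl fun i _ => ?_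
  rw [map_sum]
  refine Finset.sum_congr rfl fun p _ => ?_
  rw [map_smul, hΦgrad x hx i p]
  simp

/-- if the travel times have a differentiable convex potential `Φ`, all
externality functions are constant, and `B` is a Pareto-minimal feasible budget vector,
then a feasible flow is implementable and respects `B` iff it minimizes `Φ` over
`{y ∈ ℱ : G_j(y) ≤ B_j for all j}`. -/
theorem implementable_respecting_iff_minimizes_potential
    [∀ i, Nonempty (P i)]
    (d : I → ℝ) (hd : ∀ i, 0 < d i)
    (τ : (∀ i, P i → ℝ) → ∀ i, P i → ℝ)
    (Φ : (∀ i, P i → ℝ) → ℝ)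
    (hΦdiff : Differentiable ℝ Φ) (hΦconv : ConvexOn ℝ Set.univ Φ)
    (hΦgrad : ∀ x, Feasible d x →
      ∀ i p, fderiv ℝ Φ x (Pi.single i (Pi.single p (1 : ℝ))) = τ x i p)
    (g : ∀ i, P i → J → ℝ) (hg : ∀ i p j, 0 ≤ g i p j)
    (B : J → ℝ) (hB : FeasibleBudget d g B)
    (hPareto : ¬ ∃ B' : J → ℝ, FeasibleBudget d g B' ∧ (∀ j, B' j ≤ B j) ∧ B' ≠ B)
    (x : ∀ i, P i → ℝ) (hx : Feasible d x) :
    ((∃ lam : J → ℝ, (∀ j, 0 ≤ lam j) ∧ IsWardrop d (cPrice τ g lam) x) ∧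
        (∀ j, Gtot g j x ≤ B j)) ↔
      ((∀ j, Gtot g j x ≤ B j) ∧
        ∀ y, Feasible d y → (∀ j, Gtot g j y ≤ B j) → Φ x ≤ Φ y) := by
  classical
  have hGxnn : ∀ j, 0 ≤ Gtot g j x :=
    fun j => Finset.sum_nonneg fun i _ => Finset.sum_nonneg fun p _ =>
      mul_nonneg (hg i p j) (hx.1 i p)
  -- key sum-splitting identity
  have hsplit : ∀ (lam : J → ℝ) (z : ∀ i, P i → ℝ),
      ∑ i, ∑ p, z i p * cPrice τ g lam x i p
      = (∑ i, ∑ p, z i p * τ x i p) + ∑ j, lam j * (∑ i, ∑ p, g i p j * z i p) := by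
    intro lam z
    have h1 : ∑ j, lam j * (∑ i, ∑ p, g i p j * z i p)
        = ∑ i, ∑ p, ∑ j, lam j * (g i p j * z i p) := by
      simp only [Finset.mul_sum]
      rw [Finset.sum_comm]
      exact Finset.sum_congr rfl fun i _ => Finset.sum_comm
    rw [h1, ← Finset.sum_add_distrib]
    refine Finset.sum_congr rfl fun i _ => ?_
    rw [← Finset.sum_add_distrib]
    refine Finset.sum_congr rfl fun p _ => ?_
    simp only [cPrice, mul_add, Finset.mul_sum]
    congr 1
    exact Finset.sum_congr rfl fun j _ => by ring
  constructor
  · rintro ⟨⟨lam, hlam0, hxF, hW⟩, hxB⟩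
    refine ⟨hxB, fun y hy hyB => ?_⟩
    have hGxB : ∀ j, Gtot g j x = B j := by
      by_contra hne
      push_neg at hne
      obtain ⟨j₀, hj₀⟩ := hne
      exact hPareto ⟨fun j => Gtot g j x,
        ⟨hGxnn, x, hx, fun j => le_rfl⟩, hxB, fun hEq => hj₀ (congrFun hEq j₀)⟩
    set z : ∀ i, P i → ℝ := fun i p => y i p - x i p with hz
    have claimB : 0 ≤ ∑ i, ∑ p, z i p * τ x i p := by
      have h2 : ∀ j, ∑ i, ∑ p, g i p j * z i p = Gtot g j y - Gtot g j x := by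
        intro j
        simp only [hz, Gtot, mul_sub, Finset.sum_sub_distrib]
      have h3 : ∑ j, lam j * (∑ i, ∑ p, g i p j * z i p) ≤ 0 := by
        refine Finset.sum_nonpos fun j _ => ?_
        rw [h2 j]
        have : Gtot g j y - Gtot g j x ≤ 0 := by
          have := hyB j; have := hGxB j; linarith
        exact mul_nonpos_of_nonneg_of_nonpos (hlam0 j) this
      have h4 : 0 ≤ ∑ i, ∑ p, z i p * cPrice τ g lam x i p := by
        refine Finset.sum_nonneg fun i _ => ?_
        -- find a used path
        have hex : ∃ p₀, 0 < x i p₀ := by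
          by_contra hno
          push_neg at hno
          have : ∑ p, x i p = 0 :=
            Finset.sum_eq_zero fun p _ => le_antisymm (hno p) (hx.1 i p)
          rw [hx.2 i] at this
          exact absurd this (ne_of_gt (hd i))
        obtain ⟨p₀, hp₀⟩ := hex
        set m : ℝ := cPrice τ g lam x i p₀ with hm
        have hcm : ∀ q, m ≤ cPrice τ g lam x i q := fun q => hW i p₀ hp₀ q
        have h5 : ∑ p, x i p * cPrice τ g lam x i p = m * d i := by
          have : ∀ p ∈ (univ : Finset (P i)),
              x i p * cPrice τ g lam x i p = x i p * m := by
            intro p _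
            rcases eq_or_lt_of_le (hx.1 i p) with hxp | hxp
            · rw [← hxp]; ring
            · rw [le_antisymm (hW i p hxp p₀) (hcm p)]
          rw [Finset.sum_congr rfl this, ← Finset.sum_mul, hx.2 i, mul_comm]
        have h6 : m * d i ≤ ∑ p, y i p * cPrice τ g lam x i p := by
          have h7 : ∑ p, y i p * m ≤ ∑ p, y i p * cPrice τ g lam x i p :=
            Finset.sum_le_sum fun p _ =>
              mul_le_mul_of_nonneg_left (hcm p) (hy.1 i p)
          rw [← Finset.sum_mul, hy.2 i, mul_comm] at h7
          exact h7
        have h8 : ∑ p, z i p * cPrice τ g lam x i p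
            = (∑ p, y i p * cPrice τ g lam x i p)
              - ∑ p, x i p * cPrice τ g lam x i p := by
          simp only [hz, sub_mul, Finset.sum_sub_distrib]
        rw [h8, h5]
        linarith
      have h9 := hsplit lam z
      linarith
    have claimA : fderiv ℝ Φ x (y - x) ≤ Φ y - Φ x := by
      refine deriv_le_of_slope _ _ (hasDerivAt_comp_line Φ hΦdiff x (y - x)) _ ?_
      intro t ht0 ht1
      have hconv := hΦconv.2 (Set.mem_univ x) (Set.mem_univ y)
        (by linarith : (0:ℝ) ≤ 1 - t) ht0.le (by ring)
      have hxt : x + t • (y - x) = (1 - t) • x + t • y := by module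
      rw [hxt]
      simp only [smul_eq_mul] at hconv
      simp only [zero_smul, add_zero]
      nlinarith [hconv]
    have h10 : fderiv ℝ Φ x (y - x) = ∑ i, ∑ p, z i p * τ x i p := by
      rw [fderiv_eval d τ Φ hΦgrad x hx (y - x)]
      exact Finset.sum_congr rfl fun i _ => Finset.sum_congr rfl fun p _ => by
        simp [hz]
    linarith [claimA, claimB, h10 ▸ claimB]
  · rintro ⟨hxB, hmin⟩
    refine ⟨?_, hxB⟩
    set a : ((Σ i, P i) ⊕ (I ⊕ I) ⊕ J) → ((Σ i, P i) → ℝ) := fun k =>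
      match k with
      | Sum.inl s => if x s.1 s.2 = 0 then (fun t => if t = s then 1 else 0) else 0
      | Sum.inr (Sum.inl (Sum.inl i)) => fun t => if t.1 = i then 1 else 0
      | Sum.inr (Sum.inl (Sum.inr i)) => fun t => if t.1 = i then -1 else 0
      | Sum.inr (Sum.inr j) => fun t => -(g t.1 t.2 j) with ha
    set c : (Σ i, P i) → ℝ := fun t => τ x t.1 t.2 with hcdef
    have hsig : ∀ f : (Σ i, P i) → ℝ, ∑ t, f t = ∑ i, ∑ p, f ⟨i, p⟩ := by
      intro f
      rw [← Finset.univ_sigma_univ, Finset.sum_sigma]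
    have hFk : ∀ v : (Σ i, P i) → ℝ, (∀ k, 0 ≤ dotp (a k) v) → 0 ≤ dotp c v := by
      intro v hv
      have f1 : ∀ s : Σ i, P i, x s.1 s.2 = 0 → 0 ≤ v s := by
        intro s hs
        have h1 := hv (Sum.inl s)
        rw [ha] at h1
        simp only [dotp, hs, if_true, ite_mul, one_mul, zero_mul, if_pos] at h1
        rwa [Finset.sum_ite_eq' univ s v, if_pos (mem_univ s)] at h1
      have f2 : ∀ i, ∑ p, v ⟨i, p⟩ = 0 := by
        intro i
        have h1 := hv (Sum.inr (Sum.inl (Sum.inl i)))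
        have h2 := hv (Sum.inr (Sum.inl (Sum.inr i)))
        rw [ha] at h1 h2
        simp only [dotp] at h1 h2
        rw [hsig] at h1 h2
        simp only [ite_mul, one_mul, zero_mul, neg_mul, neg_zero] at h1 h2
        have hr1 : ∀ i' ∈ (univ : Finset I),
            (∑ p, if i' = i then v ⟨i', p⟩ else 0)
            = if i' = i then ∑ p, v ⟨i', p⟩ else 0 := by
          intro i' _; split_ifs <;> simp
        have hr2 : ∀ i' ∈ (univ : Finset I),
            (∑ p : P i', if i' = i then -v ⟨i', p⟩ else 0)
            = if i' = i then -∑ p, v ⟨i', p⟩ else 0 := by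
          intro i' _; split_ifs <;> simp
        rw [Finset.sum_congr rfl hr1, Finset.sum_ite_eq' univ i, if_pos (mem_univ i)] at h1
        rw [Finset.sum_congr rfl hr2, Finset.sum_ite_eq' univ i, if_pos (mem_univ i)] at h2
        linarith
      have f3 : ∀ j, ∑ i, ∑ p, g i p j * v ⟨i, p⟩ ≤ 0 := by
        intro j
        have h1 := hv (Sum.inr (Sum.inr j))
        rw [ha] at h1
        simp only [dotp, neg_mul] at h1
        rw [Finset.sum_neg_distrib, hsig] at h1
        linarith
      -- identify the goal with a directional derivative
      have hDv : fderiv ℝ Φ x (fun i p => v ⟨i, p⟩) = dotp c v := by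
        rw [fderiv_eval d τ Φ hΦgrad x hx, hcdef]
        simp only [dotp]
        rw [hsig]
        exact Finset.sum_congr rfl fun i _ => Finset.sum_congr rfl fun p _ => by ring
      by_contra hneg
      push_neg at hneg
      have hder := hasDerivAt_comp_line Φ hΦdiff x (fun i p => v ⟨i, p⟩)
      rw [hDv] at hder
      have hslope : Filter.Tendsto (slope (fun t : ℝ => Φ (x + t • fun i p => v ⟨i, p⟩)) 0)
          (nhdsWithin 0 (Set.Ioi 0)) (nhds (dotp c v)) :=
        (hasDerivAt_iff_tendsto_slope.mp hder).mono_left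
          (nhdsWithin_mono 0 fun t ht => ne_of_gt ht)
      have hev1 := hslope.eventually_lt_const hneg
      have hev2 : ∀ s : Σ i, P i, ∀ᶠ t : ℝ in nhdsWithin 0 (Set.Ioi 0),
          0 ≤ x s.1 s.2 + t * v s := by
        intro s
        rcases eq_or_lt_of_le (hx.1 s.1 s.2) with hs | hs
        · filter_upwards [self_mem_nhdsWithin] with t ht
          have h0 : 0 ≤ v s := f1 s hs.symm
          have ht' : (0:ℝ) < t := ht
          nlinarith
        · have hcont : Filter.Tendsto (fun t : ℝ => x s.1 s.2 + t * v s)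
              (nhdsWithin 0 (Set.Ioi 0)) (nhds (x s.1 s.2)) := by
            have hco : Continuous fun t : ℝ => x s.1 s.2 + t * v s :=
              continuous_const.add (continuous_id.mul continuous_const)
            have := hco.tendsto 0
            simp only [zero_mul, add_zero] at this
            exact this.mono_left nhdsWithin_le_nhds
          filter_upwards [hcont.eventually (eventually_gt_nhds hs)] with t ht using ht.le
      obtain ⟨t, ⟨hts, htf⟩, htpos⟩ :=
        ((hev1.and (Filter.eventually_all.mpr hev2)).and self_mem_nhdsWithin).exists
      have htpos' : (0:ℝ) < t := htpos
      set y' : ∀ i, P i → ℝ := fun i p => x i p + t * v ⟨i, p⟩ with hy'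
      have hy'feas : Feasible d y' := by
        constructor
        · intro i p; exact htf ⟨i, p⟩
        · intro i
          rw [hy']
          rw [Finset.sum_add_distrib, hx.2 i, ← Finset.mul_sum, f2 i, mul_zero, add_zero]
      have hy'B : ∀ j, Gtot g j y' ≤ B j := by
        intro j
        have hGe : Gtot g j y' = Gtot g j x + t * ∑ i, ∑ p, g i p j * v ⟨i, p⟩ := by
          simp only [Gtot, hy']
          rw [Finset.mul_sum, ← Finset.sum_add_distrib]
          refine Finset.sum_congr rfl fun i _ => ?_
          rw [Finset.mul_sum, ← Finset.sum_add_distrib]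
          exact Finset.sum_congr rfl fun p _ => by ring
        rw [hGe]
        have := f3 j
        have := hxB j
        nlinarith
      have hmin' := hmin y' hy'feas hy'B
      have hxy' : x + t • (fun i p => v ⟨i, p⟩) = y' := by
        funext i p
        simp [hy']
      rw [slope_def_field, sub_zero, div_lt_iff₀ htpos', zero_mul, hxy'] at hts
      simp only [zero_smul, add_zero] at hts
      linarith
    obtain ⟨lam, hlam, hclam⟩ := farkas a c hFk
    have heval : ∀ t : Σ i, P i,
        τ x t.1 t.2 = (if x t.1 t.2 = 0 then lam (Sum.inl t) else 0)
          + lam (Sum.inr (Sum.inl (Sum.inl t.1)))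
          - lam (Sum.inr (Sum.inl (Sum.inr t.1)))
          - ∑ j, lam (Sum.inr (Sum.inr j)) * g t.1 t.2 j := by
      intro t
      have h0 := congrFun hclam t
      rw [Finset.sum_apply, Fintype.sum_sum_type, Fintype.sum_sum_type,
        Fintype.sum_sum_type] at h0
      simp only [Pi.smul_apply, smul_eq_mul, ha] at h0
      have hS1 : ∑ s : Σ i, P i,
          lam (Sum.inl s) * (if x s.1 s.2 = 0 then (fun t' => if t' = s then (1:ℝ) else 0) else 0) t
          = if x t.1 t.2 = 0 then lam (Sum.inl t) else 0 := by
        have hr : ∀ s ∈ (univ : Finset (Σ i, P i)),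
            lam (Sum.inl s) * (if x s.1 s.2 = 0 then (fun t' => if t' = s then (1:ℝ) else 0) else 0) t
            = if s = t then (if x t.1 t.2 = 0 then lam (Sum.inl t) else 0) else 0 := by
          intro s _
          by_cases hst : s = t
          · subst hst
            by_cases hx0 : x s.1 s.2 = 0 <;> simp [hx0]
          · have hts : ¬ t = s := fun h => hst h.symm
            by_cases hx0 : x s.1 s.2 = 0 <;> simp [hx0, hst, hts]
        rw [Finset.sum_congr rfl hr, Finset.sum_ite_eq' univ t, if_pos (mem_univ t)]
      have hS2 : ∑ i', lam (Sum.inr (Sum.inl (Sum.inl i'))) * (if t.1 = i' then (1:ℝ) else 0)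
          = lam (Sum.inr (Sum.inl (Sum.inl t.1))) := by
        simp [mul_ite, Finset.sum_ite_eq]
      have hS3 : ∑ i', lam (Sum.inr (Sum.inl (Sum.inr i'))) * (if t.1 = i' then (-1:ℝ) else 0)
          = -lam (Sum.inr (Sum.inl (Sum.inr t.1))) := by
        simp [mul_ite, mul_neg, Finset.sum_ite_eq]
      have hS4 : ∑ j, lam (Sum.inr (Sum.inr j)) * (-(g t.1 t.2 j))
          = -∑ j, lam (Sum.inr (Sum.inr j)) * g t.1 t.2 j := by
        simp [mul_neg]
      rw [hS1, hS2, hS3, hS4] at h0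
      rw [hcdef] at h0
      linarith [h0]
    refine ⟨fun j => lam (Sum.inr (Sum.inr j)), fun j => hlam _, hx, ?_⟩
    intro i p hp q
    have hp' := heval ⟨i, p⟩
    have hq' := heval ⟨i, q⟩
    simp only at hp' hq'
    rw [if_neg (ne_of_gt hp)] at hp'
    have hεq : (0:ℝ) ≤ if x i q = 0 then lam (Sum.inl ⟨i, q⟩) else 0 := by
      split_ifs
      · exact hlam _
      · exact le_rfl
    simp only [cPrice]
    linarith [hp', hq', hεq]
end
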